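/- There exist a continuous function u₂ : K → ℝ and a constant C > 0 such that 0 ≤ u₂ ≤ 1 on K, u₂ vanishes on L ∩ K, and (1/C)·(6/7)^n ≤ E_n(u₂) ≤ C·(6/7)^n for every integer n ≥ 1. -/

import Mathlib

open Set

namespace SC

/-- The eight boundary vertices of the Sierpiński carpet. -/
noncomputable def p : Fin 8 → ℝ × ℝ :=
  ![(0, 0), (1 / 2, 0), (1, 0), (1, 1 / 2), (1, 1), (1 / 2, 1), (0, 1), (0, 1 / 2)]

/-- The eight contractions `f_i(x) = (x − p_i)/3 + p_i`. -/
noncomputable def f (i : Fin 8) (x : ℝ × ℝ) : ℝ × ℝ :=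
  ((x.1 - (p i).1) / 3 + (p i).1, (x.2 - (p i).2) / 3 + (p i).2)

/-- The vertex sets `V₀ = {p₀,…,p₇}`, `V_{n+1} = ⋃ f_i(V_n)`. -/
noncomputable def V : ℕ → Set (ℝ × ℝ)
  | 0 => Set.range p
  | n + 1 => ⋃ i : Fin 8, f i '' V n

/-- The Sierpiński carpet: the closure of `V_* = ⋃_n V_n`. -/
noncomputable def K : Set (ℝ × ℝ) := closure (⋃ n, V n)

/-- For a word `w = w₁…w_n`, the composition `f_{w₁} ∘ … ∘ f_{w_n}`. -/
noncomputable def fw {n : ℕ} (w : Fin n → Fin 8) (x : ℝ × ℝ) : ℝ × ℝ :=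
  (List.ofFn w).foldr f x

/-- The Euclidean distance on `ℝ × ℝ`. -/
noncomputable def edist2 (x y : ℝ × ℝ) : ℝ :=
  Real.sqrt ((x.1 - y.1) ^ 2 + (x.2 - y.2) ^ 2)

/-- The graph energy
`E_n(u) = Σ_{w ∈ W_n} Σ (u(p) − u(q))²`, the inner sum being over unordered
pairs of distinct `p, q ∈ V_w` with Euclidean distance `2⁻¹·3⁻ⁿ` (written as
half of the corresponding ordered sum). -/
noncomputable def E (n : ℕ) (u : ℝ × ℝ → ℝ) : ℝ :=
  ∑ w : Fin n → Fin 8,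
    (∑ i : Fin 8, ∑ j : Fin 8,
      if edist2 (fw w (p i)) (fw w (p j)) = 1 / 2 * (1 / 3) ^ n then
        (u (fw w (p i)) - u (fw w (p j))) ^ 2
      else 0) / 2

/-- The boundary `L = ({0,1}×[0,1]) ∪ ([0,1]×{0,1})` of the unit square. -/
def L : Set (ℝ × ℝ) :=
  (({0, 1} : Set ℝ) ×ˢ Set.Icc (0 : ℝ) 1) ∪ (Set.Icc (0 : ℝ) 1 ×ˢ ({0, 1} : Set ℝ))

end SC


namespace SCg
open BoundedContinuousFunction


noncomputable def lin (a c : ℝ) : C(ℝ, ℝ) := ⟨fun x => a * x + c, by continuity⟩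

noncomputable def T (h : ℝ →ᵇ ℝ) : ℝ →ᵇ ℝ :=
  (2/7 : ℝ) • h.compContinuous (lin 3 0) + (3/7 : ℝ) • h.compContinuous (lin 3 (-1))
    + (2/7 : ℝ) • h.compContinuous (lin 3 (-2))

lemma T_apply (h : ℝ →ᵇ ℝ) (x : ℝ) :
    T h x = 2/7 * h (3*x) + 3/7 * h (3*x - 1) + 2/7 * h (3*x - 2) := by
  simp [T, lin]
  ring_nf

def S : Set (ℝ →ᵇ ℝ) :=
  {h | (∀ x ≤ (0:ℝ), h x = 0) ∧ (∀ x, (1:ℝ) ≤ x → h x = 1) ∧ (∀ x, h x ∈ Icc (0:ℝ) 1)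
    ∧ Monotone ⇑h}

lemma cev (x : ℝ) : Continuous fun h : ℝ →ᵇ ℝ => h x :=
  continuous_eval_const x

lemma isClosed_S : IsClosed S := by
  have h1 : IsClosed {h : ℝ →ᵇ ℝ | ∀ x ≤ (0:ℝ), h x = 0} := by
    have : {h : ℝ →ᵇ ℝ | ∀ x ≤ (0:ℝ), h x = 0} = ⋂ x ∈ Iic (0:ℝ), {h | h x = 0} := by
      ext h; simp [Set.mem_iInter]
    rw [this]
    exact isClosed_biInter fun x _ => isClosed_eq (cev x) continuous_const
  have h2 : IsClosed {h : ℝ →ᵇ ℝ | ∀ x, (1:ℝ) ≤ x → h x = 1} := by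
    have : {h : ℝ →ᵇ ℝ | ∀ x, (1:ℝ) ≤ x → h x = 1} = ⋂ x ∈ Ici (1:ℝ), {h | h x = 1} := by
      ext h; simp [Set.mem_iInter]
    rw [this]
    exact isClosed_biInter fun x _ => isClosed_eq (cev x) continuous_const
  have h3 : IsClosed {h : ℝ →ᵇ ℝ | ∀ x, h x ∈ Icc (0:ℝ) 1} := by
    have : {h : ℝ →ᵇ ℝ | ∀ x, h x ∈ Icc (0:ℝ) 1} = ⋂ x, {h : ℝ →ᵇ ℝ | h x ∈ Icc (0:ℝ) 1} := by
      ext h; simp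
    rw [this]
    exact isClosed_iInter fun x => (isClosed_Icc).preimage (cev x)
  have h4 : IsClosed {h : ℝ →ᵇ ℝ | Monotone ⇑h} := by
    have : {h : ℝ →ᵇ ℝ | Monotone ⇑h}
        = ⋂ (q : ℝ × ℝ), ⋂ (_ : q.1 ≤ q.2), {h : ℝ →ᵇ ℝ | h q.1 ≤ h q.2} := by
      ext h
      simp only [Set.mem_iInter, Set.mem_setOf_eq]
      exact ⟨fun hm q hq => hm hq, fun hm a b hab => hm (a, b) hab⟩
    rw [this]
    exact isClosed_iInter fun q => isClosed_iInter fun _ =>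
      isClosed_le (cev q.1) (cev q.2)
  exact h1.inter (h2.inter (h3.inter h4))

noncomputable def clamp : ℝ →ᵇ ℝ :=
  BoundedContinuousFunction.mkOfBound ⟨fun x => min 1 (max 0 x), continuous_const.min (continuous_const.max continuous_id)⟩ 1 (by
    intro x y
    rw [Real.dist_eq]
    have h1 : min 1 (max 0 x) ∈ Icc (0:ℝ) 1 := by
      constructor
      · exact le_min zero_le_one (le_max_left 0 x)
      · exact min_le_left _ _
    have h2 : min 1 (max 0 y) ∈ Icc (0:ℝ) 1 := by
      constructor
      · exact le_min zero_le_one (le_max_left 0 y)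
      · exact min_le_left _ _
    rw [abs_le]
    constructor <;> simp_all <;> linarith [h1.1, h1.2, h2.1, h2.2])

lemma clamp_mem_S : clamp ∈ S := by
  refine ⟨fun x hx => ?_, fun x hx => ?_, fun x => ?_, ?_⟩
  · simp [clamp, max_eq_left hx]
  · simp [clamp, min_eq_left, max_eq_right (le_trans zero_le_one hx), hx]
  · exact ⟨le_min zero_le_one (le_max_left 0 x), min_le_left _ _⟩
  · intro a b hab
    simp only [clamp, BoundedContinuousFunction.mkOfBound, ContinuousMap.coe_mk]
    exact min_le_min le_rfl (max_le_max le_rfl hab)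

lemma T_mem_S {h : ℝ →ᵇ ℝ} (hh : h ∈ S) : T h ∈ S := by
  obtain ⟨h0, h1, hI, hM⟩ := hh
  refine ⟨fun x hx => ?_, fun x hx => ?_, fun x => ?_, ?_⟩
  · rw [T_apply, h0 (3*x) (by linarith), h0 (3*x-1) (by linarith), h0 (3*x-2) (by linarith)]
    ring
  · rw [T_apply, h1 (3*x) (by linarith), h1 (3*x-1) (by linarith), h1 (3*x-2) (by linarith)]
    ring
  · rw [T_apply]
    have i1 := hI (3*x); have i2 := hI (3*x-1); have i3 := hI (3*x-2)
    constructor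
    · nlinarith [i1.1, i2.1, i3.1]
    · nlinarith [i1.2, i2.2, i3.2]
  · intro a b hab
    rw [T_apply, T_apply]
    have m1 : h (3*a) ≤ h (3*b) := hM (by linarith)
    have m2 : h (3*a-1) ≤ h (3*b-1) := hM (by linarith)
    have m3 : h (3*a-2) ≤ h (3*b-2) := hM (by linarith)
    nlinarith

lemma T_contract {h h' : ℝ →ᵇ ℝ} (hh : h ∈ S) (hh' : h' ∈ S) :
    dist (T h) (T h') ≤ (3/7) * dist h h' := by
  rw [BoundedContinuousFunction.dist_le (by positivity)]
  intro x
  have key : ∀ t : ℝ, |h t - h' t| ≤ dist h h' := fun t => by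
    rw [← Real.dist_eq]; exact BoundedContinuousFunction.dist_coe_le_dist t
  have hz : ∀ t ≤ (0:ℝ), h t - h' t = 0 := fun t ht => by
    rw [hh.1 t ht, hh'.1 t ht]; ring
  have ho : ∀ t : ℝ, (1:ℝ) ≤ t → h t - h' t = 0 := fun t ht => by
    rw [hh.2.1 t ht, hh'.2.1 t ht]; ring
  rw [Real.dist_eq]
  have expand : T h x - T h' x
      = 2/7 * (h (3*x) - h' (3*x)) + 3/7 * (h (3*x-1) - h' (3*x-1))
        + 2/7 * (h (3*x-2) - h' (3*x-2)) := by
    rw [T_apply, T_apply]; ring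
  rcases le_or_gt x (1/3) with hx1 | hx1
  · rw [expand, hz (3*x-1) (by linarith), hz (3*x-2) (by linarith)]
    have := key (3*x)
    have habs : |(2:ℝ)/7 * (h (3*x) - h' (3*x)) + 3/7 * 0 + 2/7 * 0|
        = 2/7 * |h (3*x) - h' (3*x)| := by
      rw [show (2:ℝ)/7 * (h (3*x) - h' (3*x)) + 3/7 * 0 + 2/7 * 0
          = 2/7 * (h (3*x) - h' (3*x)) by ring, abs_mul]
      simp [abs_of_nonneg]
      norm_num
    rw [habs]
    nlinarith [abs_nonneg (h (3*x) - h' (3*x)), dist_nonneg (x := h) (y := h')]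
  · rcases le_or_gt x (2/3) with hx2 | hx2
    · rw [expand, ho (3*x) (by linarith), hz (3*x-2) (by linarith)]
      have := key (3*x-1)
      have habs : |(2:ℝ)/7 * 0 + 3/7 * (h (3*x-1) - h' (3*x-1)) + 2/7 * 0|
          = 3/7 * |h (3*x-1) - h' (3*x-1)| := by
        rw [show (2:ℝ)/7 * 0 + 3/7 * (h (3*x-1) - h' (3*x-1)) + 2/7 * 0
            = 3/7 * (h (3*x-1) - h' (3*x-1)) by ring, abs_mul]
        simp [abs_of_nonneg]
        norm_num
      rw [habs]
      nlinarith
    · rw [expand, ho (3*x) (by linarith), ho (3*x-1) (by linarith)]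
      have := key (3*x-2)
      have habs : |(2:ℝ)/7 * 0 + 3/7 * 0 + 2/7 * (h (3*x-2) - h' (3*x-2))|
          = 2/7 * |h (3*x-2) - h' (3*x-2)| := by
        rw [show (2:ℝ)/7 * 0 + 3/7 * 0 + 2/7 * (h (3*x-2) - h' (3*x-2))
            = 2/7 * (h (3*x-2) - h' (3*x-2)) by ring, abs_mul]
        simp [abs_of_nonneg]
        norm_num
      rw [habs]
      nlinarith [abs_nonneg (h (3*x-2) - h' (3*x-2)), dist_nonneg (x := h) (y := h')]

instance : Nonempty S := ⟨⟨clamp, clamp_mem_S⟩⟩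

noncomputable instance : CompleteSpace S := isClosed_S.completeSpace_coe

noncomputable def Ts : S → S := fun h => ⟨T h.1, T_mem_S h.2⟩

lemma Ts_contract : ContractingWith (⟨3/7, by norm_num⟩ : NNReal) Ts := by
  constructor
  · exact NNReal.coe_lt_coe.mp (show (3/7:ℝ) < ((1:NNReal):ℝ) by norm_num)
  · refine LipschitzWith.of_dist_le_mul fun a b => ?_
    rw [Subtype.dist_eq, Subtype.dist_eq]
    have hd : dist (Ts a).1 (Ts b).1 ≤ (3/7 : ℝ) * dist a.1 b.1 := T_contract a.2 b.2
    exact hd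

noncomputable def gS : S := ContractingWith.fixedPoint Ts Ts_contract

noncomputable def g : ℝ → ℝ := fun x => (gS : ℝ →ᵇ ℝ) x

lemma g_fixed (x : ℝ) : g x = 2/7 * g (3*x) + 3/7 * g (3*x - 1) + 2/7 * g (3*x - 2) := by
  have h := Ts_contract.fixedPoint_isFixedPt
  have h2 : Ts gS = gS := h
  have h3 : T (gS : ℝ →ᵇ ℝ) = (gS : ℝ →ᵇ ℝ) := congrArg Subtype.val h2
  have := T_apply (gS : ℝ →ᵇ ℝ) x
  rw [h3] at this
  exact this

lemma g_mem : (gS : ℝ →ᵇ ℝ) ∈ S := gS.2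

lemma g_zero_of_nonpos {x : ℝ} (hx : x ≤ 0) : g x = 0 := g_mem.1 x hx
lemma g_one_of_ge {x : ℝ} (hx : 1 ≤ x) : g x = 1 := g_mem.2.1 x hx
lemma g_mem_Icc (x : ℝ) : g x ∈ Icc (0:ℝ) 1 := g_mem.2.2.1 x
lemma g_mono : Monotone g := g_mem.2.2.2
lemma g_continuous : Continuous g := (gS : ℝ →ᵇ ℝ).continuous

lemma g_zero : g 0 = 0 := g_zero_of_nonpos le_rfl
lemma g_one : g 1 = 1 := g_one_of_ge le_rfl

lemma g_half : g (1/2) = 1/2 := by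
  have := g_fixed (1/2)
  rw [g_one_of_ge (by norm_num : (1:ℝ) ≤ 3 * (1/2)),
    g_zero_of_nonpos (by norm_num : 3 * (1/2:ℝ) - 2 ≤ 0)] at this
  have h2 : 3 * (1/2 : ℝ) - 1 = 1/2 := by norm_num
  rw [h2] at this
  linarith

/-- The three self-affine identities. -/
lemma g_aff0 {x : ℝ} (h0 : 0 ≤ x) (h1 : x ≤ 1) : g (x/3) = 2/7 * g x := by
  have := g_fixed (x/3)
  rw [show 3 * (x/3) = x by ring] at this
  rw [g_zero_of_nonpos (show x - 1 ≤ 0 by linarith),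
    g_zero_of_nonpos (show x - 2 ≤ 0 by linarith)] at this
  linarith

lemma g_aff1 {x : ℝ} (h0 : 0 ≤ x) (h1 : x ≤ 1) : g ((x+1)/3) = 2/7 + 3/7 * g x := by
  have := g_fixed ((x+1)/3)
  rw [show 3 * ((x+1)/3) = x + 1 by ring] at this
  rw [show x + 1 - 1 = x by ring, show x + 1 - 2 = x - 1 by ring,
    g_one_of_ge (show (1:ℝ) ≤ x + 1 by linarith),
    g_zero_of_nonpos (show x - 1 ≤ 0 by linarith)] at this
  linarith

lemma g_aff2 {x : ℝ} (h0 : 0 ≤ x) (h1 : x ≤ 1) : g ((x+2)/3) = 5/7 + 2/7 * g x := by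
  have := g_fixed ((x+2)/3)
  rw [show 3 * ((x+2)/3) = x + 2 by ring] at this
  rw [show x + 2 - 2 = x by ring, show x + 2 - 1 = x + 1 by ring,
    g_one_of_ge (show (1:ℝ) ≤ x + 2 by linarith),
    g_one_of_ge (show (1:ℝ) ≤ x + 1 by linarith)] at this
  linarith

lemma g_third : g (1/3) = 2/7 := by
  have := g_aff1 (le_refl (0:ℝ)) zero_le_one
  rw [g_zero, show ((0:ℝ)+1)/3 = 1/3 by norm_num] at this
  linarith

lemma g_twothird : g (2/3) = 5/7 := by
  have := g_aff2 (le_refl (0:ℝ)) zero_le_one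
  rw [g_zero, show ((0:ℝ)+2)/3 = 2/3 by norm_num] at this
  linarith

end SCg

section Work
open SCg

namespace SC

/-! ### Value lemmas -/

lemma pv0 : p 0 = ((0:ℝ), (0:ℝ)) := rfl
lemma pv1 : p 1 = ((1/2:ℝ), (0:ℝ)) := rfl
lemma pv2 : p 2 = ((1:ℝ), (0:ℝ)) := rfl
lemma pv3 : p 3 = ((1:ℝ), (1/2:ℝ)) := rfl
lemma pv4 : p 4 = ((1:ℝ), (1:ℝ)) := rfl
lemma pv5 : p 5 = ((1/2:ℝ), (1:ℝ)) := rfl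
lemma pv6 : p 6 = ((0:ℝ), (1:ℝ)) := rfl
lemma pv7 : p 7 = ((0:ℝ), (1/2:ℝ)) := rfl

/-- column digits -/
def cx : Fin 8 → Fin 3 := ![0,1,2,2,2,1,0,0]
/-- row digits -/
def cy : Fin 8 → Fin 3 := ![0,0,0,1,2,2,2,1]
/-- weights -/
noncomputable def b3 : Fin 3 → ℝ := ![2/7, 3/7, 2/7]

noncomputable def BB (c : Fin 8 → Fin 3) {n : ℕ} (w : Fin n → Fin 8) : ℝ :=
  ∏ k, b3 (c (w k))

noncomputable def Bx {n : ℕ} (w : Fin n → Fin 8) : ℝ := BB cx w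
noncomputable def By {n : ℕ} (w : Fin n → Fin 8) : ℝ := BB cy w

lemma cxv0 : ((cx 0 : ℕ) : ℝ) = 0 := by rw [show (cx 0 : ℕ) = 0 from rfl]; norm_num
lemma cyv0 : ((cy 0 : ℕ) : ℝ) = 0 := by rw [show (cy 0 : ℕ) = 0 from rfl]; norm_num
lemma cxv1 : ((cx 1 : ℕ) : ℝ) = 1 := by rw [show (cx 1 : ℕ) = 1 from rfl]; norm_num
lemma cyv1 : ((cy 1 : ℕ) : ℝ) = 0 := by rw [show (cy 1 : ℕ) = 0 from rfl]; norm_num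
lemma cxv2 : ((cx 2 : ℕ) : ℝ) = 2 := by rw [show (cx 2 : ℕ) = 2 from rfl]; norm_num
lemma cyv2 : ((cy 2 : ℕ) : ℝ) = 0 := by rw [show (cy 2 : ℕ) = 0 from rfl]; norm_num
lemma cxv3 : ((cx 3 : ℕ) : ℝ) = 2 := by rw [show (cx 3 : ℕ) = 2 from rfl]; norm_num
lemma cyv3 : ((cy 3 : ℕ) : ℝ) = 1 := by rw [show (cy 3 : ℕ) = 1 from rfl]; norm_num
lemma cxv4 : ((cx 4 : ℕ) : ℝ) = 2 := by rw [show (cx 4 : ℕ) = 2 from rfl]; norm_num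
lemma cyv4 : ((cy 4 : ℕ) : ℝ) = 2 := by rw [show (cy 4 : ℕ) = 2 from rfl]; norm_num
lemma cxv5 : ((cx 5 : ℕ) : ℝ) = 1 := by rw [show (cx 5 : ℕ) = 1 from rfl]; norm_num
lemma cyv5 : ((cy 5 : ℕ) : ℝ) = 2 := by rw [show (cy 5 : ℕ) = 2 from rfl]; norm_num
lemma cxv6 : ((cx 6 : ℕ) : ℝ) = 0 := by rw [show (cx 6 : ℕ) = 0 from rfl]; norm_num
lemma cyv6 : ((cy 6 : ℕ) : ℝ) = 2 := by rw [show (cy 6 : ℕ) = 2 from rfl]; norm_num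
lemma cxv7 : ((cx 7 : ℕ) : ℝ) = 0 := by rw [show (cx 7 : ℕ) = 0 from rfl]; norm_num
lemma cyv7 : ((cy 7 : ℕ) : ℝ) = 1 := by rw [show (cy 7 : ℕ) = 1 from rfl]; norm_num

lemma b3_pos (c : Fin 3) : 0 < b3 c := by fin_cases c <;> norm_num [b3]

lemma BB_pos (c : Fin 8 → Fin 3) {n : ℕ} (w : Fin n → Fin 8) : 0 < BB c w :=
  Finset.prod_pos fun k _ => b3_pos _

lemma f_fst (j : Fin 8) (z : ℝ × ℝ) : (f j z).1 = (z.1 + ((cx j : ℕ) : ℝ)) / 3 := by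
  fin_cases j <;>
    simp [f, pv0, pv1, pv2, pv3, pv4, pv5, pv6, pv7,
      cxv0, cxv1, cxv2, cxv3, cxv4, cxv5, cxv6, cxv7] <;> ring

lemma f_snd (j : Fin 8) (z : ℝ × ℝ) : (f j z).2 = (z.2 + ((cy j : ℕ) : ℝ)) / 3 := by
  fin_cases j <;>
    simp [f, pv0, pv1, pv2, pv3, pv4, pv5, pv6, pv7,
      cyv0, cyv1, cyv2, cyv3, cyv4, cyv5, cyv6, cyv7] <;> ring

/-! ### Words and scaling -/

lemma fw_nil (w : Fin 0 → Fin 8) (x : ℝ × ℝ) : fw w x = x := rfl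

lemma fw_succ {n : ℕ} (w : Fin (n+1) → Fin 8) (x : ℝ × ℝ) :
    fw w x = f (w 0) (fw (fun i => w i.succ) x) := by
  simp [fw, List.ofFn_succ]

lemma fw_cons {n : ℕ} (j : Fin 8) (w : Fin n → Fin 8) (x : ℝ × ℝ) :
    fw (Fin.cons j w) x = f j (fw w x) := by
  rw [fw_succ]
  simp [Fin.cons_zero, Fin.cons_succ]

lemma edist2_f (j : Fin 8) (a b : ℝ × ℝ) : edist2 (f j a) (f j b) = edist2 a b / 3 := by
  unfold edist2
  rw [f_fst, f_fst, f_snd, f_snd,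
    show ((a.1 + ((cx j : ℕ):ℝ))/3 - (b.1 + ((cx j : ℕ):ℝ))/3)^2
        + ((a.2 + ((cy j : ℕ):ℝ))/3 - (b.2 + ((cy j : ℕ):ℝ))/3)^2
      = ((a.1 - b.1)^2 + (a.2 - b.2)^2) / 9 by ring,
    show (9:ℝ) = 3^2 by norm_num,
    Real.sqrt_div (by positivity) ((3:ℝ)^2), Real.sqrt_sq (by norm_num : (0:ℝ) ≤ 3)]

lemma edist2_fw {n : ℕ} (w : Fin n → Fin 8) (a b : ℝ × ℝ) :
    edist2 (fw w a) (fw w b) = (1/3)^n * edist2 a b := by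
  induction n with
  | zero => simp [fw_nil]
  | succ m ih =>
    rw [fw_succ, fw_succ, edist2_f, ih, pow_succ]
    ring

/-! ### Adjacency -/

def adj : Fin 8 → Fin 8 → Bool := fun i j =>
  ((i.val + 1) % 8 == j.val) || ((j.val + 1) % 8 == i.val)

lemma sqrt_eq_half_iff {q : ℝ} (h : 0 ≤ q) : Real.sqrt q = 1/2 ↔ q = 1/4 := by
  constructor
  · intro hs
    have := Real.sq_sqrt h
    rw [hs] at this
    linarith
  · intro hq
    rw [hq, show (1/4 : ℝ) = (1/2)^2 by norm_num, Real.sqrt_sq (by norm_num : (0:ℝ) ≤ 1/2)]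

lemma adj_iff (i j : Fin 8) : edist2 (p i) (p j) = 1/2 ↔ adj i j = true := by
  fin_cases i <;> fin_cases j <;>
    (unfold edist2
     rw [sqrt_eq_half_iff (by positivity)]
     norm_num [p, adj])

lemma cond_iff {n : ℕ} (w : Fin n → Fin 8) (i j : Fin 8) :
    (edist2 (fw w (p i)) (fw w (p j)) = 1 / 2 * (1 / 3) ^ n) ↔ adj i j = true := by
  rw [edist2_fw, ← adj_iff]
  constructor
  · intro h
    have h3 : ((1:ℝ)/3)^n ≠ 0 := by positivity
    rw [mul_comm (1/2 : ℝ) (((1:ℝ)/3)^n)] at h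
    exact mul_left_cancel₀ h3 h
  · intro h; rw [h]; ring

/-! ### Coordinates under `fw` -/

lemma cx_le (j : Fin 8) : ((cx j : ℕ) : ℝ) ≤ 2 := by
  have := (cx j).is_le
  exact_mod_cast Nat.cast_le.mpr this

lemma cx_nonneg (j : Fin 8) : (0:ℝ) ≤ ((cx j : ℕ) : ℝ) := Nat.cast_nonneg _

lemma cy_le (j : Fin 8) : ((cy j : ℕ) : ℝ) ≤ 2 := by
  have := (cy j).is_le
  exact_mod_cast Nat.cast_le.mpr this

lemma cy_nonneg (j : Fin 8) : (0:ℝ) ≤ ((cy j : ℕ) : ℝ) := Nat.cast_nonneg _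

lemma fw_unit {n : ℕ} (w : Fin n → Fin 8) (z : ℝ × ℝ)
    (h1 : z.1 ∈ Set.Icc (0:ℝ) 1) (h2 : z.2 ∈ Set.Icc (0:ℝ) 1) :
    (fw w z).1 ∈ Set.Icc (0:ℝ) 1 ∧ (fw w z).2 ∈ Set.Icc (0:ℝ) 1 := by
  induction n with
  | zero => exact ⟨h1, h2⟩
  | succ m ih =>
    rw [fw_succ]
    obtain ⟨ha, hb⟩ := ih (fun i => w i.succ)
    rw [f_fst, f_snd]
    simp only [Set.mem_Icc] at ha hb ⊢
    have c1 := cx_nonneg (w 0); have c2 := cx_le (w 0)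
    have c3 := cy_nonneg (w 0); have c4 := cy_le (w 0)
    exact ⟨⟨by linarith [ha.1], by linarith [ha.2]⟩, ⟨by linarith [hb.1], by linarith [hb.2]⟩⟩

lemma p_unit (i : Fin 8) : (p i).1 ∈ Set.Icc (0:ℝ) 1 ∧ (p i).2 ∈ Set.Icc (0:ℝ) 1 := by
  fin_cases i <;> constructor <;> norm_num [p]

/-- g composed with the first coordinate of `fw` transforms affinely. -/
lemma g_fw_fst {n : ℕ} (w : Fin n → Fin 8) (z z' : ℝ × ℝ)
    (h1 : z.1 ∈ Set.Icc (0:ℝ) 1) (h2 : z.2 ∈ Set.Icc (0:ℝ) 1)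
    (h1' : z'.1 ∈ Set.Icc (0:ℝ) 1) (h2' : z'.2 ∈ Set.Icc (0:ℝ) 1) :
    g (fw w z).1 - g (fw w z').1 = Bx w * (g z.1 - g z'.1) := by
  induction n with
  | zero =>
    simp [fw_nil, Bx, BB]
  | succ m ih =>
    rw [fw_succ, fw_succ, f_fst, f_fst]
    obtain ⟨hZ1, _⟩ := fw_unit (fun i => w i.succ) z h1 h2
    obtain ⟨hZ1', _⟩ := fw_unit (fun i => w i.succ) z' h1' h2'
    have hBx : Bx w = b3 (cx (w 0)) * Bx (fun i => w i.succ) := by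
      rw [Bx, Bx, BB, BB, Fin.prod_univ_succ]
    have hih : g (fw (fun i => w i.succ) z).1 - g (fw (fun i => w i.succ) z').1 = Bx (fun i => w i.succ) * (g z.1 - g z'.1) := ih _
    rcases (by decide : ∀ c : Fin 3, c = 0 ∨ c = 1 ∨ c = 2) (cx (w 0)) with hc | hc | hc <;>
      rw [hc] at hBx ⊢ <;>
      simp only [show ((0:Fin 3):ℕ) = 0 from rfl, show ((1:Fin 3):ℕ) = 1 from rfl,
        show ((2:Fin 3):ℕ) = 2 from rfl, Nat.cast_zero, Nat.cast_one, Nat.cast_ofNat,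
        show b3 0 = 2/7 from rfl, show b3 1 = 3/7 from rfl, show b3 2 = 2/7 from rfl] at hBx ⊢
    · rw [show ((fw (fun i => w i.succ) z).1 + 0)/3 = (fw (fun i => w i.succ) z).1/3 by ring,
        show ((fw (fun i => w i.succ) z').1 + 0)/3 = (fw (fun i => w i.succ) z').1/3 by ring,
        g_aff0 hZ1.1 hZ1.2, g_aff0 hZ1'.1 hZ1'.2, hBx]
      linear_combination (2/7 : ℝ) * hih
    · rw [g_aff1 hZ1.1 hZ1.2, g_aff1 hZ1'.1 hZ1'.2, hBx]
      linear_combination (3/7 : ℝ) * hih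
    · rw [g_aff2 hZ1.1 hZ1.2, g_aff2 hZ1'.1 hZ1'.2, hBx]
      linear_combination (2/7 : ℝ) * hih

lemma g_fw_snd {n : ℕ} (w : Fin n → Fin 8) (z z' : ℝ × ℝ)
    (h1 : z.1 ∈ Set.Icc (0:ℝ) 1) (h2 : z.2 ∈ Set.Icc (0:ℝ) 1)
    (h1' : z'.1 ∈ Set.Icc (0:ℝ) 1) (h2' : z'.2 ∈ Set.Icc (0:ℝ) 1) :
    g (fw w z).2 - g (fw w z').2 = By w * (g z.2 - g z'.2) := by
  induction n with
  | zero =>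
    simp [fw_nil, By, BB]
  | succ m ih =>
    rw [fw_succ, fw_succ, f_snd, f_snd]
    obtain ⟨_, hZ2⟩ := fw_unit (fun i => w i.succ) z h1 h2
    obtain ⟨_, hZ2'⟩ := fw_unit (fun i => w i.succ) z' h1' h2'
    have hBy : By w = b3 (cy (w 0)) * By (fun i => w i.succ) := by
      rw [By, By, BB, BB, Fin.prod_univ_succ]
    have hih : g (fw (fun i => w i.succ) z).2 - g (fw (fun i => w i.succ) z').2 = By (fun i => w i.succ) * (g z.2 - g z'.2) := ih _
    rcases (by decide : ∀ c : Fin 3, c = 0 ∨ c = 1 ∨ c = 2) (cy (w 0)) with hc | hc | hc <;>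
      rw [hc] at hBy ⊢ <;>
      simp only [show ((0:Fin 3):ℕ) = 0 from rfl, show ((1:Fin 3):ℕ) = 1 from rfl,
        show ((2:Fin 3):ℕ) = 2 from rfl, Nat.cast_zero, Nat.cast_one, Nat.cast_ofNat,
        show b3 0 = 2/7 from rfl, show b3 1 = 3/7 from rfl, show b3 2 = 2/7 from rfl] at hBy ⊢
    · rw [show ((fw (fun i => w i.succ) z).2 + 0)/3 = (fw (fun i => w i.succ) z).2/3 by ring,
        show ((fw (fun i => w i.succ) z').2 + 0)/3 = (fw (fun i => w i.succ) z').2/3 by ring,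
        g_aff0 hZ2.1 hZ2.2, g_aff0 hZ2'.1 hZ2'.2, hBy]
      linear_combination (2/7 : ℝ) * hih
    · rw [g_aff1 hZ2.1 hZ2.2, g_aff1 hZ2'.1 hZ2'.2, hBy]
      linear_combination (3/7 : ℝ) * hih
    · rw [g_aff2 hZ2.1 hZ2.2, g_aff2 hZ2'.1 hZ2'.2, hBy]
      linear_combination (2/7 : ℝ) * hih

lemma fw_snd_eq {n : ℕ} (w : Fin n → Fin 8) (z z' : ℝ × ℝ) (h : z.2 = z'.2) :
    (fw w z).2 = (fw w z').2 := by
  induction n with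
  | zero => exact h
  | succ m ih =>
    rw [fw_succ, fw_succ, f_snd, f_snd, ih (fun i => w i.succ)]

lemma fw_fst_eq {n : ℕ} (w : Fin n → Fin 8) (z z' : ℝ × ℝ) (h : z.1 = z'.1) :
    (fw w z).1 = (fw w z').1 := by
  induction n with
  | zero => exact h
  | succ m ih =>
    rw [fw_succ, fw_succ, f_fst, f_fst, ih (fun i => w i.succ)]

/-! ### The function u and its Lipschitz properties -/

noncomputable def uu (z : ℝ × ℝ) : ℝ :=
  min (min (g z.1) (1 - g z.1)) (min (g z.2) (1 - g z.2))

lemma uu_continuous : Continuous uu := by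
  unfold uu
  have hg1 : Continuous fun z : ℝ × ℝ => g z.1 := g_continuous.comp continuous_fst
  have hg2 : Continuous fun z : ℝ × ℝ => g z.2 := g_continuous.comp continuous_snd
  exact (hg1.min (continuous_const.sub hg1)).min (hg2.min (continuous_const.sub hg2))

lemma uu_nonneg (z : ℝ × ℝ) : 0 ≤ uu z := by
  have a1 := g_mem_Icc z.1
  have a2 := g_mem_Icc z.2
  unfold uu
  apply le_min (le_min a1.1 (by linarith [a1.2])) (le_min a2.1 (by linarith [a2.2]))

lemma uu_le_one (z : ℝ × ℝ) : uu z ≤ 1 := by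
  have a1 := g_mem_Icc z.1
  unfold uu
  calc min (min (g z.1) (1 - g z.1)) (min (g z.2) (1 - g z.2))
      ≤ min (g z.1) (1 - g z.1) := min_le_left _ _
    _ ≤ g z.1 := min_le_left _ _
    _ ≤ 1 := a1.2

lemma uu_diff_h (P Q : ℝ × ℝ) (h : P.2 = Q.2) : |uu P - uu Q| ≤ |g P.1 - g Q.1| := by
  unfold uu
  rw [h]
  calc |min (min (g P.1) (1 - g P.1)) (min (g Q.2) (1 - g Q.2))
        - min (min (g Q.1) (1 - g Q.1)) (min (g Q.2) (1 - g Q.2))|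
      ≤ max |min (g P.1) (1 - g P.1) - min (g Q.1) (1 - g Q.1)|
          |min (g Q.2) (1 - g Q.2) - min (g Q.2) (1 - g Q.2)| :=
        abs_min_sub_min_le_max _ _ _ _
    _ ≤ |g P.1 - g Q.1| := by
        apply max_le
        · calc |min (g P.1) (1 - g P.1) - min (g Q.1) (1 - g Q.1)|
              ≤ max |g P.1 - g Q.1| |1 - g P.1 - (1 - g Q.1)| := abs_min_sub_min_le_max _ _ _ _
            _ ≤ |g P.1 - g Q.1| := by
                apply max_le le_rfl
                rw [show 1 - g P.1 - (1 - g Q.1) = -(g P.1 - g Q.1) by ring, abs_neg]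
        · simp

lemma uu_diff_v (P Q : ℝ × ℝ) (h : P.1 = Q.1) : |uu P - uu Q| ≤ |g P.2 - g Q.2| := by
  unfold uu
  rw [h]
  calc |min (min (g Q.1) (1 - g Q.1)) (min (g P.2) (1 - g P.2))
        - min (min (g Q.1) (1 - g Q.1)) (min (g Q.2) (1 - g Q.2))|
      ≤ max |min (g Q.1) (1 - g Q.1) - min (g Q.1) (1 - g Q.1)|
          |min (g P.2) (1 - g P.2) - min (g Q.2) (1 - g Q.2)| :=
        abs_min_sub_min_le_max _ _ _ _
    _ ≤ |g P.2 - g Q.2| := by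
        apply max_le
        · simp
        · calc |min (g P.2) (1 - g P.2) - min (g Q.2) (1 - g Q.2)|
              ≤ max |g P.2 - g Q.2| |1 - g P.2 - (1 - g Q.2)| := abs_min_sub_min_le_max _ _ _ _
            _ ≤ |g P.2 - g Q.2| := by
                apply max_le le_rfl
                rw [show 1 - g P.2 - (1 - g Q.2) = -(g P.2 - g Q.2) by ring, abs_neg]

/-! ### Edge difference bounds -/

lemma delta_h {n : ℕ} (w : Fin n → Fin 8) (i j : Fin 8) (hy : (p i).2 = (p j).2)
    (hv : (g (p i).1 - g (p j).1)^2 = 1/4) :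
    (uu (fw w (p i)) - uu (fw w (p j)))^2 ≤ (Bx w)^2 / 4 := by
  have hd := uu_diff_h (fw w (p i)) (fw w (p j)) (fw_snd_eq w _ _ hy)
  have hg : g (fw w (p i)).1 - g (fw w (p j)).1 = Bx w * (g (p i).1 - g (p j).1) :=
    g_fw_fst w _ _ (p_unit i).1 (p_unit i).2 (p_unit j).1 (p_unit j).2
  calc (uu (fw w (p i)) - uu (fw w (p j)))^2
      = |uu (fw w (p i)) - uu (fw w (p j))|^2 := (sq_abs _).symm
    _ ≤ |g (fw w (p i)).1 - g (fw w (p j)).1|^2 := by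
        apply pow_le_pow_left₀ (abs_nonneg _) hd
    _ = (g (fw w (p i)).1 - g (fw w (p j)).1)^2 := sq_abs _
    _ = (Bx w)^2 * ((g (p i).1 - g (p j).1)^2) := by rw [hg]; ring
    _ = (Bx w)^2 / 4 := by rw [hv]; ring

lemma delta_v {n : ℕ} (w : Fin n → Fin 8) (i j : Fin 8) (hx : (p i).1 = (p j).1)
    (hv : (g (p i).2 - g (p j).2)^2 = 1/4) :
    (uu (fw w (p i)) - uu (fw w (p j)))^2 ≤ (By w)^2 / 4 := by
  have hd := uu_diff_v (fw w (p i)) (fw w (p j)) (fw_fst_eq w _ _ hx)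
  have hg : g (fw w (p i)).2 - g (fw w (p j)).2 = By w * (g (p i).2 - g (p j).2) :=
    g_fw_snd w _ _ (p_unit i).1 (p_unit i).2 (p_unit j).1 (p_unit j).2
  calc (uu (fw w (p i)) - uu (fw w (p j)))^2
      = |uu (fw w (p i)) - uu (fw w (p j))|^2 := (sq_abs _).symm
    _ ≤ |g (fw w (p i)).2 - g (fw w (p j)).2|^2 := by
        apply pow_le_pow_left₀ (abs_nonneg _) hd
    _ = (g (fw w (p i)).2 - g (fw w (p j)).2)^2 := sq_abs _
    _ = (By w)^2 * ((g (p i).2 - g (p j).2)^2) := by rw [hg]; ring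
    _ = (By w)^2 / 4 := by rw [hv]; ring

/-! ### Rewriting the energy via adjacency -/

lemma E_eq (n : ℕ) (u' : ℝ × ℝ → ℝ) :
    E n u' = ∑ w : Fin n → Fin 8,
      (∑ i : Fin 8, ∑ j : Fin 8,
        if adj i j = true then (u' (fw w (p i)) - u' (fw w (p j)))^2 else 0) / 2 := by
  unfold E
  refine Finset.sum_congr rfl fun w _ => ?_
  congr 1
  refine Finset.sum_congr rfl fun i _ => ?_
  refine Finset.sum_congr rfl fun j _ => ?_
  exact if_congr (cond_iff w i j) rfl rfl

lemma gpv : g (0:ℝ) = 0 ∧ g (1/2 : ℝ) = 1/2 ∧ g (1:ℝ) = 1 := ⟨g_zero, g_half, g_one⟩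

lemma inner_le {n : ℕ} (w : Fin n → Fin 8) :
    (∑ i : Fin 8, ∑ j : Fin 8,
        if adj i j = true then (uu (fw w (p i)) - uu (fw w (p j)))^2 else 0)
      ≤ 2*(Bx w)^2 + 2*(By w)^2 := by
  have h01 := delta_h w 0 1 rfl (by rw [show (p 0).1 = 0 from rfl, show (p 1).1 = (1/2:ℝ) from rfl, g_zero, g_half]; norm_num)
  have h10 := delta_h w 1 0 rfl (by rw [show (p 0).1 = 0 from rfl, show (p 1).1 = (1/2:ℝ) from rfl, g_zero, g_half]; norm_num)
  have h12 := delta_h w 1 2 rfl (by rw [show (p 2).1 = 1 from rfl, show (p 1).1 = (1/2:ℝ) from rfl, g_one, g_half]; norm_num)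
  have h21 := delta_h w 2 1 rfl (by rw [show (p 2).1 = 1 from rfl, show (p 1).1 = (1/2:ℝ) from rfl, g_one, g_half]; norm_num)
  have h45 := delta_h w 4 5 rfl (by rw [show (p 4).1 = 1 from rfl, show (p 5).1 = (1/2:ℝ) from rfl, g_one, g_half]; norm_num)
  have h54 := delta_h w 5 4 rfl (by rw [show (p 4).1 = 1 from rfl, show (p 5).1 = (1/2:ℝ) from rfl, g_one, g_half]; norm_num)
  have h56 := delta_h w 5 6 rfl (by rw [show (p 6).1 = 0 from rfl, show (p 5).1 = (1/2:ℝ) from rfl, g_zero, g_half]; norm_num)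
  have h65 := delta_h w 6 5 rfl (by rw [show (p 6).1 = 0 from rfl, show (p 5).1 = (1/2:ℝ) from rfl, g_zero, g_half]; norm_num)
  have h23 := delta_v w 2 3 rfl (by rw [show (p 2).2 = 0 from rfl, show (p 3).2 = (1/2:ℝ) from rfl, g_zero, g_half]; norm_num)
  have h32 := delta_v w 3 2 rfl (by rw [show (p 2).2 = 0 from rfl, show (p 3).2 = (1/2:ℝ) from rfl, g_zero, g_half]; norm_num)
  have h34 := delta_v w 3 4 rfl (by rw [show (p 4).2 = 1 from rfl, show (p 3).2 = (1/2:ℝ) from rfl, g_one, g_half]; norm_num)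
  have h43 := delta_v w 4 3 rfl (by rw [show (p 4).2 = 1 from rfl, show (p 3).2 = (1/2:ℝ) from rfl, g_one, g_half]; norm_num)
  have h67 := delta_v w 6 7 rfl (by rw [show (p 6).2 = 1 from rfl, show (p 7).2 = (1/2:ℝ) from rfl, g_one, g_half]; norm_num)
  have h76 := delta_v w 7 6 rfl (by rw [show (p 6).2 = 1 from rfl, show (p 7).2 = (1/2:ℝ) from rfl, g_one, g_half]; norm_num)
  have h70 := delta_v w 7 0 rfl (by rw [show (p 0).2 = 0 from rfl, show (p 7).2 = (1/2:ℝ) from rfl, g_zero, g_half]; norm_num)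
  have h07 := delta_v w 0 7 rfl (by rw [show (p 0).2 = 0 from rfl, show (p 7).2 = (1/2:ℝ) from rfl, g_zero, g_half]; norm_num)
  simp only [Fin.sum_univ_eight]
  simp only [show adj 0 0 = false from by decide,
    show adj 0 1 = true from by decide,
    show adj 0 2 = false from by decide,
    show adj 0 3 = false from by decide,
    show adj 0 4 = false from by decide,
    show adj 0 5 = false from by decide,
    show adj 0 6 = false from by decide,
    show adj 0 7 = true from by decide,
    show adj 1 0 = true from by decide,
    show adj 1 1 = false from by decide,
    show adj 1 2 = true from by decide,
    show adj 1 3 = false from by decide,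
    show adj 1 4 = false from by decide,
    show adj 1 5 = false from by decide,
    show adj 1 6 = false from by decide,
    show adj 1 7 = false from by decide,
    show adj 2 0 = false from by decide,
    show adj 2 1 = true from by decide,
    show adj 2 2 = false from by decide,
    show adj 2 3 = true from by decide,
    show adj 2 4 = false from by decide,
    show adj 2 5 = false from by decide,
    show adj 2 6 = false from by decide,
    show adj 2 7 = false from by decide,
    show adj 3 0 = false from by decide,
    show adj 3 1 = false from by decide,
    show adj 3 2 = true from by decide,
    show adj 3 3 = false from by decide,
    show adj 3 4 = true from by decide,
    show adj 3 5 = false from by decide,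
    show adj 3 6 = false from by decide,
    show adj 3 7 = false from by decide,
    show adj 4 0 = false from by decide,
    show adj 4 1 = false from by decide,
    show adj 4 2 = false from by decide,
    show adj 4 3 = true from by decide,
    show adj 4 4 = false from by decide,
    show adj 4 5 = true from by decide,
    show adj 4 6 = false from by decide,
    show adj 4 7 = false from by decide,
    show adj 5 0 = false from by decide,
    show adj 5 1 = false from by decide,
    show adj 5 2 = false from by decide,
    show adj 5 3 = false from by decide,
    show adj 5 4 = true from by decide,
    show adj 5 5 = false from by decide,
    show adj 5 6 = true from by decide,
    show adj 5 7 = false from by decide,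
    show adj 6 0 = false from by decide,
    show adj 6 1 = false from by decide,
    show adj 6 2 = false from by decide,
    show adj 6 3 = false from by decide,
    show adj 6 4 = false from by decide,
    show adj 6 5 = true from by decide,
    show adj 6 6 = false from by decide,
    show adj 6 7 = true from by decide,
    show adj 7 0 = true from by decide,
    show adj 7 1 = false from by decide,
    show adj 7 2 = false from by decide,
    show adj 7 3 = false from by decide,
    show adj 7 4 = false from by decide,
    show adj 7 5 = false from by decide,
    show adj 7 6 = true from by decide,
    show adj 7 7 = false from by decide, if_true, if_false]
  norm_num
  linarith

lemma inner_nonneg {n : ℕ} (w : Fin n → Fin 8) (u' : ℝ × ℝ → ℝ) :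
    0 ≤ (∑ i : Fin 8, ∑ j : Fin 8,
        if adj i j = true then (u' (fw w (p i)) - u' (fw w (p j)))^2 else 0) := by
  refine Finset.sum_nonneg fun i _ => Finset.sum_nonneg fun j _ => ?_
  split <;> positivity

lemma inner_ge {n : ℕ} (w : Fin n → Fin 8) :
    (uu (fw w (p 0)) - uu (fw w (p 1)))^2 + (uu (fw w (p 1)) - uu (fw w (p 0)))^2
      ≤ (∑ i : Fin 8, ∑ j : Fin 8,
        if adj i j = true then (uu (fw w (p i)) - uu (fw w (p j)))^2 else 0) := by
  simp only [Fin.sum_univ_eight]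
  simp only [show adj 0 0 = false from by decide,
    show adj 0 1 = true from by decide,
    show adj 0 2 = false from by decide,
    show adj 0 3 = false from by decide,
    show adj 0 4 = false from by decide,
    show adj 0 5 = false from by decide,
    show adj 0 6 = false from by decide,
    show adj 0 7 = true from by decide,
    show adj 1 0 = true from by decide,
    show adj 1 1 = false from by decide,
    show adj 1 2 = true from by decide,
    show adj 1 3 = false from by decide,
    show adj 1 4 = false from by decide,
    show adj 1 5 = false from by decide,
    show adj 1 6 = false from by decide,
    show adj 1 7 = false from by decide,
    show adj 2 0 = false from by decide,
    show adj 2 1 = true from by decide,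
    show adj 2 2 = false from by decide,
    show adj 2 3 = true from by decide,
    show adj 2 4 = false from by decide,
    show adj 2 5 = false from by decide,
    show adj 2 6 = false from by decide,
    show adj 2 7 = false from by decide,
    show adj 3 0 = false from by decide,
    show adj 3 1 = false from by decide,
    show adj 3 2 = true from by decide,
    show adj 3 3 = false from by decide,
    show adj 3 4 = true from by decide,
    show adj 3 5 = false from by decide,
    show adj 3 6 = false from by decide,
    show adj 3 7 = false from by decide,
    show adj 4 0 = false from by decide,
    show adj 4 1 = false from by decide,
    show adj 4 2 = false from by decide,
    show adj 4 3 = true from by decide,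
    show adj 4 4 = false from by decide,
    show adj 4 5 = true from by decide,
    show adj 4 6 = false from by decide,
    show adj 4 7 = false from by decide,
    show adj 5 0 = false from by decide,
    show adj 5 1 = false from by decide,
    show adj 5 2 = false from by decide,
    show adj 5 3 = false from by decide,
    show adj 5 4 = true from by decide,
    show adj 5 5 = false from by decide,
    show adj 5 6 = true from by decide,
    show adj 5 7 = false from by decide,
    show adj 6 0 = false from by decide,
    show adj 6 1 = false from by decide,
    show adj 6 2 = false from by decide,
    show adj 6 3 = false from by decide,
    show adj 6 4 = false from by decide,
    show adj 6 5 = true from by decide,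
    show adj 6 6 = false from by decide,
    show adj 6 7 = true from by decide,
    show adj 7 0 = true from by decide,
    show adj 7 1 = false from by decide,
    show adj 7 2 = false from by decide,
    show adj 7 3 = false from by decide,
    show adj 7 4 = false from by decide,
    show adj 7 5 = false from by decide,
    show adj 7 6 = true from by decide,
    show adj 7 7 = false from by decide, if_true, if_false]
  norm_num
  have sq : ∀ a b : ℝ × ℝ, 0 ≤ (uu a - uu b)^2 := fun a b => sq_nonneg _
  linarith [sq (fw w (p 1)) (fw w (p 2)), sq (fw w (p 2)) (fw w (p 1)),
    sq (fw w (p 2)) (fw w (p 3)), sq (fw w (p 3)) (fw w (p 2)),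
    sq (fw w (p 3)) (fw w (p 4)), sq (fw w (p 4)) (fw w (p 3)),
    sq (fw w (p 4)) (fw w (p 5)), sq (fw w (p 5)) (fw w (p 4)),
    sq (fw w (p 5)) (fw w (p 6)), sq (fw w (p 6)) (fw w (p 5)),
    sq (fw w (p 6)) (fw w (p 7)), sq (fw w (p 7)) (fw w (p 6)),
    sq (fw w (p 7)) (fw w (p 0)), sq (fw w (p 0)) (fw w (p 7))]

/-! ### Sums over words -/

lemma sum_words {n : ℕ} (F : (Fin (n+1) → Fin 8) → ℝ) :
    ∑ w : Fin (n+1) → Fin 8, F w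
      = ∑ j : Fin 8, ∑ w' : Fin n → Fin 8, F (Fin.cons j w') := by
  rw [← Equiv.sum_comp (Fin.consEquiv fun _ => Fin 8) F, Fintype.sum_prod_type]
  rfl

lemma BB_cons (c : Fin 8 → Fin 3) {n : ℕ} (j : Fin 8) (w' : Fin n → Fin 8) :
    BB c (Fin.cons j w') = b3 (c j) * BB c w' := by
  rw [BB, BB, Fin.prod_univ_succ]
  simp [Fin.cons_zero, Fin.cons_succ]

lemma sum_BB (c : Fin 8 → Fin 3) (hc : ∑ j : Fin 8, (b3 (c j))^2 = 6/7) :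
    ∀ n : ℕ, ∑ w : Fin n → Fin 8, (BB c w)^2 = (6/7)^n := by
  intro n
  induction n with
  | zero => simp [BB]
  | succ m ih =>
    rw [sum_words (fun w => (BB c w)^2)]
    have : ∀ j : Fin 8, ∑ w' : Fin m → Fin 8, (BB c (Fin.cons j w'))^2
        = (b3 (c j))^2 * (6/7)^m := by
      intro j
      rw [← ih, Finset.mul_sum]
      refine Finset.sum_congr rfl fun w' _ => ?_
      rw [BB_cons]
      ring
    rw [Finset.sum_congr rfl fun j _ => this j, ← Finset.sum_mul, hc, pow_succ]
    ring

lemma sum_cx : ∑ j : Fin 8, (b3 (cx j))^2 = 6/7 := by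
  rw [Fin.sum_univ_eight]
  norm_num [show b3 (cx 0) = 2/7 from rfl, show b3 (cx 1) = 3/7 from rfl,
    show b3 (cx 2) = 2/7 from rfl, show b3 (cx 3) = 2/7 from rfl,
    show b3 (cx 4) = 2/7 from rfl, show b3 (cx 5) = 3/7 from rfl,
    show b3 (cx 6) = 2/7 from rfl, show b3 (cx 7) = 2/7 from rfl]

lemma sum_cy : ∑ j : Fin 8, (b3 (cy j))^2 = 6/7 := by
  rw [Fin.sum_univ_eight]
  norm_num [show b3 (cy 0) = 2/7 from rfl, show b3 (cy 1) = 2/7 from rfl,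
    show b3 (cy 2) = 2/7 from rfl, show b3 (cy 3) = 3/7 from rfl,
    show b3 (cy 4) = 2/7 from rfl, show b3 (cy 5) = 2/7 from rfl,
    show b3 (cy 6) = 2/7 from rfl, show b3 (cy 7) = 3/7 from rfl]

/-! ### Energy upper bound -/

lemma E_upper (n : ℕ) : E n uu ≤ 2 * (6/7)^n := by
  rw [E_eq]
  have : ∀ w : Fin n → Fin 8, (∑ i : Fin 8, ∑ j : Fin 8,
        if adj i j = true then (uu (fw w (p i)) - uu (fw w (p j)))^2 else 0) / 2
      ≤ (Bx w)^2 + (By w)^2 := by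
    intro w
    have := inner_le w
    linarith
  calc (∑ w : Fin n → Fin 8, (∑ i : Fin 8, ∑ j : Fin 8,
        if adj i j = true then (uu (fw w (p i)) - uu (fw w (p j)))^2 else 0) / 2)
      ≤ ∑ w : Fin n → Fin 8, ((Bx w)^2 + (By w)^2) :=
        Finset.sum_le_sum fun w _ => this w
    _ = (∑ w : Fin n → Fin 8, (BB cx w)^2) + (∑ w : Fin n → Fin 8, (BB cy w)^2) := by
        unfold Bx By
        rw [← Finset.sum_add_distrib]
    _ = 2 * (6/7)^n := by rw [sum_BB cx sum_cx, sum_BB cy sum_cy]; ring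

/-! ### Energy lower bound -/

lemma u_cell7 (P : ℝ × ℝ) (h1 : P.1 ∈ Set.Icc (0:ℝ) (1/3)) (h2 : P.2 ∈ Set.Icc (1/3:ℝ) (2/3)) :
    uu P = g P.1 := by
  have ha : g P.1 ≤ 2/7 := by
    have := g_mono h1.2; rwa [g_third] at this
  have hb : (2/7:ℝ) ≤ g P.2 := by
    have := g_mono h2.1; rwa [g_third] at this
  have hc : g P.2 ≤ 5/7 := by
    have := g_mono h2.2; rwa [g_twothird] at this
  unfold uu
  rw [min_eq_left (show g P.1 ≤ 1 - g P.1 by linarith)]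
  exact min_eq_left (le_min (by linarith) (by linarith))

lemma cell7_coords {n : ℕ} (w' : Fin n → Fin 8) (z : ℝ × ℝ)
    (h1 : z.1 ∈ Set.Icc (0:ℝ) 1) (h2 : z.2 ∈ Set.Icc (0:ℝ) 1) :
    (fw (Fin.cons 7 w') z).1 ∈ Set.Icc (0:ℝ) (1/3)
      ∧ (fw (Fin.cons 7 w') z).2 ∈ Set.Icc (1/3:ℝ) (2/3) := by
  rw [fw_cons]
  obtain ⟨hZ1, hZ2⟩ := fw_unit w' z h1 h2
  rw [f_fst, f_snd, cxv7, cyv7]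
  simp only [Set.mem_Icc] at hZ1 hZ2 ⊢
  exact ⟨⟨by linarith [hZ1.1], by linarith [hZ1.2]⟩,
    ⟨by linarith [hZ2.1], by linarith [hZ2.2]⟩⟩

lemma delta07 {n : ℕ} (w' : Fin n → Fin 8) :
    (uu (fw (Fin.cons 7 w') (p 0)) - uu (fw (Fin.cons 7 w') (p 1)))^2
      = (Bx (Fin.cons 7 w'))^2 / 4 := by
  obtain ⟨c01, c02⟩ := cell7_coords w' (p 0) (p_unit 0).1 (p_unit 0).2
  obtain ⟨c11, c12⟩ := cell7_coords w' (p 1) (p_unit 1).1 (p_unit 1).2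
  rw [u_cell7 _ c01 c02, u_cell7 _ c11 c12]
  have hg := g_fw_fst (Fin.cons 7 w') (p 0) (p 1) (p_unit 0).1 (p_unit 0).2
    (p_unit 1).1 (p_unit 1).2
  rw [show (p 0).1 = 0 from rfl, show (p 1).1 = (1/2:ℝ) from rfl, g_zero, g_half] at hg
  rw [hg]
  ring

lemma Bx_cons7 {n : ℕ} (w' : Fin n → Fin 8) : Bx (Fin.cons 7 w') = 2/7 * Bx w' := by
  unfold Bx
  rw [BB_cons, show b3 (cx 7) = (2/7:ℝ) from rfl]

lemma E_lower (n : ℕ) : (1/49) * (6/7)^n ≤ E (n+1) uu := by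
  rw [E_eq]
  rw [sum_words (fun w => (∑ i : Fin 8, ∑ j : Fin 8,
    if adj i j = true then (uu (fw w (p i)) - uu (fw w (p j)))^2 else 0) / 2)]
  have key : (1/49) * (6/7)^n
      ≤ ∑ w' : Fin n → Fin 8, (∑ i : Fin 8, ∑ j : Fin 8,
          if adj i j = true then
            (uu (fw (Fin.cons 7 w') (p i)) - uu (fw (Fin.cons 7 w') (p j)))^2 else 0) / 2 := by
    have hsum : ∑ w' : Fin n → Fin 8, (Bx (Fin.cons 7 w'))^2/4 = (1/49)*(6/7)^n := by
      have heach : ∀ w' : Fin n → Fin 8,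
          (Bx (Fin.cons 7 w'))^2/4 = (1/49) * (BB cx w')^2 := by
        intro w'
        rw [Bx_cons7]
        unfold Bx
        ring
      rw [Finset.sum_congr rfl (fun w' _ => heach w'), ← Finset.mul_sum, sum_BB cx sum_cx]
    rw [← hsum]
    refine Finset.sum_le_sum fun w' _ => ?_
    have h1 := inner_ge (Fin.cons 7 w')
    have h2 := delta07 w'
    have h3 : (uu (fw (Fin.cons 7 w') (p 1)) - uu (fw (Fin.cons 7 w') (p 0)))^2
        = (Bx (Fin.cons 7 w'))^2 / 4 := by
      rw [← h2]; ring
    linarith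
  have hnon : ∀ j : Fin 8, 0 ≤ ∑ w' : Fin n → Fin 8, (∑ i : Fin 8, ∑ j' : Fin 8,
      if adj i j' = true then
        (uu (fw (Fin.cons j w') (p i)) - uu (fw (Fin.cons j w') (p j')))^2 else 0) / 2 := by
    intro j
    refine Finset.sum_nonneg fun w' _ => ?_
    have := inner_nonneg (Fin.cons j w') uu
    linarith
  have hsingle := Finset.single_le_sum
    (f := fun j : Fin 8 => ∑ w' : Fin n → Fin 8, (∑ i : Fin 8, ∑ j' : Fin 8,
      if adj i j' = true then
        (uu (fw (Fin.cons j w') (p i)) - uu (fw (Fin.cons j w') (p j')))^2 else 0) / 2)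
    (fun i _ => hnon i) (Finset.mem_univ (7 : Fin 8))
  calc (1/49) * (6/7)^n ≤ _ := key
    _ ≤ _ := hsingle

lemma uu_zero_on_L : ∀ x ∈ L, uu x = 0 := by
  intro x hx
  have hnn := uu_nonneg x
  rcases hx with h | h
  · have h1 : x.1 = 0 ∨ x.1 = 1 := by simpa using h.1
    have hmin : min (g x.1) (1 - g x.1) = 0 := by
      rcases h1 with h1 | h1 <;> rw [h1]
      · rw [g_zero]; simp
      · rw [g_one]; simp
    have hle : uu x ≤ 0 := by
      rw [← hmin]
      exact min_le_left _ _
    linarith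
  · have h2 : x.2 = 0 ∨ x.2 = 1 := by simpa using h.2
    have hmin : min (g x.2) (1 - g x.2) = 0 := by
      rcases h2 with h2 | h2 <;> rw [h2]
      · rw [g_zero]; simp
      · rw [g_one]; simp
    have hle : uu x ≤ 0 := by
      rw [← hmin]
      exact min_le_right _ _
    linarith

end SC
end Work

/-- Lemma 3.3: there exist a continuous `u₂ : K → ℝ` and `C > 0` with
`0 ≤ u₂ ≤ 1` on `K`, `u₂ = 0` on `L ∩ K`, and
`(1/C)·(6/7)^n ≤ E_n(u₂) ≤ C·(6/7)^n` for all `n ≥ 1`. -/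
theorem stmt_6 :
    ∃ (u₂ : ℝ × ℝ → ℝ) (C : ℝ), 0 < C ∧ ContinuousOn u₂ SC.K ∧
      (∀ x ∈ SC.K, u₂ x ∈ Set.Icc (0 : ℝ) 1) ∧
      (∀ x ∈ SC.L ∩ SC.K, u₂ x = 0) ∧
      ∀ n : ℕ, 1 ≤ n →
        (1 / C) * (6 / 7) ^ n ≤ SC.E n u₂ ∧ SC.E n u₂ ≤ C * (6 / 7) ^ n := by
  refine ⟨SC.uu, 42, by norm_num, SC.uu_continuous.continuousOn,
    fun x _ => ⟨SC.uu_nonneg x, SC.uu_le_one x⟩,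
    fun x hx => SC.uu_zero_on_L x hx.1, fun n hn => ?_⟩
  obtain ⟨m, rfl⟩ : ∃ m, n = m + 1 := ⟨n - 1, (Nat.succ_pred_eq_of_pos hn).symm⟩
  have hp : (0:ℝ) < (6/7)^m := by positivity
  constructor
  · have := SC.E_lower m
    rw [pow_succ]
    linarith
  · have := SC.E_upper (m+1)
    have hp2 : (0:ℝ) < (6/7)^(m+1) := by positivity
    linarith
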